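/- Let d ≥ 1, q > 0, let π₁,…,π_d be nonnegative reals summing to 1, and let λᵢ, μᵢ ≥ 0. Suppose θ : (−ε, ε) → ℝ is twice differentiable with θ(0) = 0, the denominators q − λᵢ(eˢ−1) − μᵢ(e⁻ˢ−1) + θ(s) are nonzero for all s ∈ (−ε, ε) and all i, and Σᵢ πᵢ/(q − λᵢ(eˢ−1) − μᵢ(e⁻ˢ−1) + θ(s)) = 1/q for all s ∈ (−ε, ε). Then, writing m := Σ_k π_k(λ_k − μ_k) (so that θ′(0) = m), one has θ″(0) = Σᵢ πᵢλᵢ + Σᵢ πᵢμᵢ + (2/q)·Σᵢ πᵢ((λᵢ − μᵢ) − m)². -/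

import Mathlib

/-- Second-order implicit differentiation of the eigenvalue equation of the resampled
M/M/1 queue: if `θ` is twice differentiable on `(-ε,ε)`, `θ(0) = 0`, and
`Σᵢ πᵢ/(q - λᵢ(eˢ-1) - μᵢ(e⁻ˢ-1) + θ(s)) = 1/q` on `(-ε,ε)` (all denominators
nonzero), then with `m = Σ_k π_k(λ_k - μ_k)` one has
`θ″(0) = Σᵢ πᵢλᵢ + Σᵢ πᵢμᵢ + (2/q)·Σᵢ πᵢ((λᵢ - μᵢ) - m)²`. -/
theorem stmt7 (d : ℕ) (hd : 1 ≤ d) (q : ℝ) (hq : 0 < q)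
    (π lam mu : Fin d → ℝ) (hπ : ∀ i, 0 ≤ π i) (hπsum : ∑ i, π i = 1)
    (hlam : ∀ i, 0 ≤ lam i) (hmu : ∀ i, 0 ≤ mu i)
    (ε : ℝ) (hε : 0 < ε) (θ : ℝ → ℝ)
    (hdiff : DifferentiableOn ℝ θ (Set.Ioo (-ε) ε))
    (hdiff2 : DifferentiableOn ℝ (deriv θ) (Set.Ioo (-ε) ε))
    (hθ0 : θ 0 = 0)
    (hden : ∀ s ∈ Set.Ioo (-ε) ε, ∀ i,
      q - lam i * (Real.exp s - 1) - mu i * (Real.exp (-s) - 1) + θ s ≠ 0)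
    (heq : ∀ s ∈ Set.Ioo (-ε) ε,
      ∑ i, π i / (q - lam i * (Real.exp s - 1) - mu i * (Real.exp (-s) - 1) + θ s) = 1 / q)
    (m : ℝ) (hm : m = ∑ k, π k * (lam k - mu k)) :
    deriv (deriv θ) 0 =
      ∑ i, π i * lam i + ∑ i, π i * mu i + (2 / q) * ∑ i, π i * ((lam i - mu i) - m) ^ 2 := by
  have h0mem : (0:ℝ) ∈ Set.Ioo (-ε) ε := ⟨by linarith, hε⟩
  have hopen : IsOpen (Set.Ioo (-ε) ε) := isOpen_Ioo
  have hq' : q ≠ 0 := hq.ne'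
  -- derivative of the denominators
  have hgd : ∀ s ∈ Set.Ioo (-ε) ε, ∀ i, HasDerivAt
      (fun t => q - lam i * (Real.exp t - 1) - mu i * (Real.exp (-t) - 1) + θ t)
      (-(lam i * Real.exp s) + mu i * Real.exp (-s) + deriv θ s) s := by
    intro s hs i
    have hθ : HasDerivAt θ (deriv θ s) s :=
      (hdiff.differentiableAt (hopen.mem_nhds hs)).hasDerivAt
    have he : HasDerivAt (fun t : ℝ => Real.exp t - 1) (Real.exp s) s :=
      (Real.hasDerivAt_exp s).sub_const 1
    have hne : HasDerivAt (fun t : ℝ => Real.exp (-t) - 1) (-Real.exp (-s)) s := by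
      have h1 : HasDerivAt (fun t : ℝ => Real.exp (-t)) (Real.exp (-s) * (-1)) s :=
        (Real.hasDerivAt_exp (-s)).comp s (hasDerivAt_neg s)
      simpa using h1.sub_const 1
    have h2 := (((hasDerivAt_const s q).fun_sub (he.const_mul (lam i))).fun_sub
      (hne.const_mul (mu i))).fun_add hθ
    convert h2 using 1
    · rfl
    · rfl
    ring
  -- derivative of each summand
  have hterm : ∀ s ∈ Set.Ioo (-ε) ε, ∀ i, HasDerivAt
      (fun t => π i / (q - lam i * (Real.exp t - 1) - mu i * (Real.exp (-t) - 1) + θ t))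
      (-(π i * (-(lam i * Real.exp s) + mu i * Real.exp (-s) + deriv θ s)) /
        (q - lam i * (Real.exp s - 1) - mu i * (Real.exp (-s) - 1) + θ s) ^ 2) s := by
    intro s hs i
    have h := (hasDerivAt_const s (π i)).fun_div (hgd s hs i) (hden s hs i)
    convert h using 1
    · rfl
    · rfl
    ring
  -- the first derivative expression vanishes on the interval
  have hD1zero : ∀ s ∈ Set.Ioo (-ε) ε,
      (∑ i, -(π i * (-(lam i * Real.exp s) + mu i * Real.exp (-s) + deriv θ s)) /
        (q - lam i * (Real.exp s - 1) - mu i * (Real.exp (-s) - 1) + θ s) ^ 2) = 0 := by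
    intro s hs
    have hsum : HasDerivAt
        (fun t => ∑ i, π i / (q - lam i * (Real.exp t - 1) - mu i * (Real.exp (-t) - 1) + θ t))
        (∑ i, -(π i * (-(lam i * Real.exp s) + mu i * Real.exp (-s) + deriv θ s)) /
          (q - lam i * (Real.exp s - 1) - mu i * (Real.exp (-s) - 1) + θ s) ^ 2) s :=
      HasDerivAt.fun_sum fun i _ => hterm s hs i
    have hconst : HasDerivAt
        (fun t => ∑ i, π i / (q - lam i * (Real.exp t - 1) - mu i * (Real.exp (-t) - 1) + θ t))
        0 s := by
      refine (hasDerivAt_const s (1/q)).congr_of_eventuallyEq ?_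
      filter_upwards [hopen.mem_nhds hs] with t ht using heq t ht
    exact hsum.unique hconst
  -- second derivative computation at 0
  have hθ2 : HasDerivAt (deriv θ) (deriv (deriv θ) 0) 0 :=
    (hdiff2.differentiableAt (hopen.mem_nhds h0mem)).hasDerivAt
  have had : ∀ i : Fin d, HasDerivAt
      (fun t => -(π i * (-(lam i * Real.exp t) + mu i * Real.exp (-t) + deriv θ t)))
      (-(π i * (-(lam i) - mu i + deriv (deriv θ) 0))) 0 := by
    intro i
    have h1 : HasDerivAt (fun t : ℝ => Real.exp (-t)) (Real.exp (-(0:ℝ)) * (-1)) 0 :=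
      (Real.hasDerivAt_exp (-(0:ℝ))).comp 0 (hasDerivAt_neg 0)
    have h2 := ((((Real.hasDerivAt_exp 0).const_mul (lam i)).fun_neg).fun_add
      (h1.const_mul (mu i))).fun_add hθ2
    have h3 := (h2.const_mul (π i)).fun_neg
    convert h3 using 1
    · rfl
    · rfl
    simp only [Real.exp_zero, neg_zero, mul_one, mul_neg_one]
    ring
  have hD2 : HasDerivAt
      (fun t => ∑ i, -(π i * (-(lam i * Real.exp t) + mu i * Real.exp (-t) + deriv θ t)) /
        (q - lam i * (Real.exp t - 1) - mu i * (Real.exp (-t) - 1) + θ t) ^ 2)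
      (∑ i,
        ((-(π i * (-(lam i) - mu i + deriv (deriv θ) 0))) *
            (q - lam i * (Real.exp 0 - 1) - mu i * (Real.exp (-0) - 1) + θ 0) ^ 2 -
          (-(π i * (-(lam i * Real.exp 0) + mu i * Real.exp (-0) + deriv θ 0))) *
            (2 * (q - lam i * (Real.exp 0 - 1) - mu i * (Real.exp (-0) - 1) + θ 0) ^ 1 *
              (-(lam i * Real.exp 0) + mu i * Real.exp (-0) + deriv θ 0))) /
        ((q - lam i * (Real.exp 0 - 1) - mu i * (Real.exp (-0) - 1) + θ 0) ^ 2) ^ 2) 0 := by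
    refine HasDerivAt.fun_sum fun i _ => ?_
    exact (had i).fun_div ((hgd 0 h0mem i).fun_pow 2) (pow_ne_zero 2 (hden 0 h0mem i))
  have hD2zero : HasDerivAt
      (fun t => ∑ i, -(π i * (-(lam i * Real.exp t) + mu i * Real.exp (-t) + deriv θ t)) /
        (q - lam i * (Real.exp t - 1) - mu i * (Real.exp (-t) - 1) + θ t) ^ 2) 0 0 := by
    refine (hasDerivAt_const 0 (0:ℝ)).congr_of_eventuallyEq ?_
    filter_upwards [hopen.mem_nhds h0mem] with t ht using hD1zero t ht
  have hEq2 := hD2.unique hD2zero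
  -- first-order equation at 0
  have hEq1 := hD1zero 0 h0mem
  simp only [Real.exp_zero, neg_zero, sub_self, mul_zero, sub_zero, hθ0, add_zero,
    mul_one, pow_one] at hEq1 hEq2
  have hq2 : q ^ 2 ≠ 0 := pow_ne_zero 2 hq'
  -- extract sum = 0 from Eq1
  rw [← Finset.sum_div, div_eq_zero_iff] at hEq1
  have hS1 : ∑ i, -(π i * (-(lam i) + mu i + deriv θ 0)) = 0 := hEq1.resolve_right hq2
  have hm' : m = ∑ i, π i * lam i - ∑ i, π i * mu i := by
    rw [hm, ← Finset.sum_sub_distrib]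
    exact Finset.sum_congr rfl fun i _ => by ring
  have hT1 : deriv θ 0 = m := by
    have : ∑ i, -(π i * (-(lam i) + mu i + deriv θ 0)) =
        ∑ i, (π i * lam i) - ∑ i, (π i * mu i) - (deriv θ 0) * ∑ i, π i := by
      rw [Finset.mul_sum, ← Finset.sum_sub_distrib, ← Finset.sum_sub_distrib]
      exact Finset.sum_congr rfl fun i _ => by ring
    rw [this, hπsum] at hS1
    rw [hm']
    linarith
  rw [hT1] at hEq2
  rw [← Finset.sum_div, div_eq_zero_iff] at hEq2
  have hq4 : (q ^ 2) ^ 2 ≠ 0 := pow_ne_zero 2 hq2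
  have hS2 : ∑ i, (-(π i * (-(lam i) - mu i + deriv (deriv θ) 0)) * q ^ 2 -
      -(π i * (-(lam i) + mu i + m)) * (2 * q * (-(lam i) + mu i + m))) = 0 :=
    hEq2.resolve_right hq4
  set T2 := deriv (deriv θ) 0 with hT2def
  have hS2' : ∑ i, (-(π i * (-(lam i) - mu i + T2)) * q ^ 2 -
      -(π i * (-(lam i) + mu i + m)) * (2 * q * (-(lam i) + mu i + m))) =
      q ^ 2 * ∑ i, π i * lam i + q ^ 2 * ∑ i, π i * mu i - (q ^ 2 * T2) * ∑ i, π i +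
        (2 * q) * ∑ i, π i * ((lam i - mu i) - m) ^ 2 := by
    rw [Finset.mul_sum, Finset.mul_sum, Finset.mul_sum, Finset.mul_sum,
      ← Finset.sum_add_distrib, ← Finset.sum_sub_distrib, ← Finset.sum_add_distrib]
    exact Finset.sum_congr rfl fun i _ => by ring
  rw [hS2', hπsum, mul_one] at hS2
  have h3 : q * T2 = q * (∑ i, π i * lam i + ∑ i, π i * mu i) +
      2 * ∑ i, π i * ((lam i - mu i) - m) ^ 2 :=
    mul_left_cancel₀ hq' (by linear_combination -hS2)
  field_simp
  linear_combination h3
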